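/- Let G(x;λ,θ) = (1 − e^{−θx})(1 + λe^{−θx}) for x > 0, θ > 0, λ ∈ [-1,1], with density g(x) = θe^{−θx}(1 + λ(2e^{−θx} − 1)). Then log g(x) is concave in x for λ ∈ [-1,0] and convex in x for λ ∈ [0,1]. -/

import Mathlib

open Set Real

private lemma te_pos {θ lam : ℝ} (hθ : 0 < θ) (h1 : -1 ≤ lam) (h2 : lam ≤ 1)
    {x : ℝ} (hx : x ∈ Set.Ioi (0:ℝ)) :
    0 < (1 - lam) + 2 * lam * Real.exp (-θ * x) := by
  have hu0 : 0 < Real.exp (-θ * x) := Real.exp_pos _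
  have hu1 : Real.exp (-θ * x) < 1 := by
    rw [Real.exp_lt_one_iff]
    have := hx.out
    nlinarith [mul_pos hθ this]
  rcases lt_or_eq_of_le h1 with h | h
  · nlinarith [mul_nonneg (by linarith : (0:ℝ) ≤ 1 - lam) (by linarith : (0:ℝ) ≤ 1 - Real.exp (-θ * x)), mul_pos (by linarith : (0:ℝ) < 1 + lam) hu0]
  · nlinarith [mul_pos (by linarith : (0:ℝ) < 1 - lam) (by linarith : (0:ℝ) < 1 - Real.exp (-θ * x))]

private lemma te_eqOn {θ lam : ℝ} (hθ : 0 < θ) (h1 : -1 ≤ lam) (h2 : lam ≤ 1) :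
    Set.EqOn (fun x => Real.log (θ * Real.exp (-θ * x) * (1 + lam * (2 * Real.exp (-θ * x) - 1))))
      (fun x => Real.log θ + (-θ * x) + Real.log ((1 - lam) + 2 * lam * Real.exp (-θ * x)))
      (Set.Ioi (0:ℝ)) := by
  intro x hx
  have hp := te_pos hθ h1 h2 hx
  have h3 : (1 : ℝ) + lam * (2 * Real.exp (-θ * x) - 1)
      = (1 - lam) + 2 * lam * Real.exp (-θ * x) := by ring
  simp only [h3]
  rw [Real.log_mul (by positivity) hp.ne', Real.log_mul hθ.ne' (Real.exp_pos _).ne',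
    Real.log_exp]

private lemma te_main {θ lam : ℝ} (hθ : 0 < θ) (h1 : -1 ≤ lam) (h2 : lam ≤ 1) :
    let F := fun x => Real.log θ + (-θ * x) + Real.log ((1 - lam) + 2 * lam * Real.exp (-θ * x))
    let F' := fun x => -θ + (2 * lam * (Real.exp (-θ * x) * -θ)) /
        ((1 - lam) + 2 * lam * Real.exp (-θ * x))
    (ContinuousOn F (Set.Ioi (0:ℝ))) ∧
    (∀ x ∈ interior (Set.Ioi (0:ℝ)), HasDerivWithinAt F (F' x) (interior (Set.Ioi (0:ℝ))) x) ∧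
    (∀ x ∈ interior (Set.Ioi (0:ℝ)), HasDerivWithinAt F'
      ((2 * lam * θ^2 * Real.exp (-θ * x) * (1 - lam)) /
        ((1 - lam) + 2 * lam * Real.exp (-θ * x))^2) (interior (Set.Ioi (0:ℝ))) x) := by
  intro F F'
  have hint : interior (Set.Ioi (0:ℝ)) = Set.Ioi 0 := interior_Ioi
  have hp : ∀ x ∈ Set.Ioi (0:ℝ), (0:ℝ) < (1 - lam) + 2 * lam * Real.exp (-θ * x) :=
    fun x hx => te_pos hθ h1 h2 hx
  have hd : ∀ x : ℝ, HasDerivAt (fun y => (1 - lam) + 2 * lam * Real.exp (-θ * y))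
      (2 * lam * (Real.exp (-θ * x) * -θ)) x := by
    intro x
    have h0 : HasDerivAt (fun y : ℝ => -θ * y) (-θ) x := by
      simpa using (hasDerivAt_id x).const_mul (-θ)
    exact ((h0.exp.const_mul (2 * lam)).const_add (1 - lam))
  refine ⟨?_, ?_, ?_⟩
  · apply ContinuousOn.add
    · exact (continuousOn_const.add (continuousOn_const.mul continuousOn_id))
    · exact ContinuousOn.log
        (by fun_prop)
        (fun x hx => (hp x hx).ne')
  · intro x hx
    rw [hint] at hx ⊢
    have hdF : HasDerivAt F (-θ + (2 * lam * (Real.exp (-θ * x) * -θ)) /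
        ((1 - lam) + 2 * lam * Real.exp (-θ * x))) x := by
      have hlog := (hd x).log (hp x hx).ne'
      have hlin : HasDerivAt (fun y : ℝ => Real.log θ + (-θ * y)) (-θ) x := by
        simpa using ((hasDerivAt_id x).const_mul (-θ)).const_add (Real.log θ)
      exact hlin.add hlog
    exact hdF.hasDerivWithinAt
  · intro x hx
    rw [hint] at hx ⊢
    have hn : HasDerivAt (fun y => 2 * lam * (Real.exp (-θ * y) * -θ))
        (2 * lam * (Real.exp (-θ * x) * -θ) * -θ) x := by
      have h0 : HasDerivAt (fun y : ℝ => -θ * y) (-θ) x := by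
        simpa using (hasDerivAt_id x).const_mul (-θ)
      have := (h0.exp.const_mul (2 * lam)).const_mul (-θ)
      convert this using 1
      · rfl
      · rfl
      · ext y; ring
      · ring
    have hq := hn.div (hd x) (hp x hx).ne'
    have hF' : HasDerivAt F' ((2 * lam * θ^2 * Real.exp (-θ * x) * (1 - lam)) /
        ((1 - lam) + 2 * lam * Real.exp (-θ * x))^2) x := by
      have := hq.const_add (-θ)
      convert this using 1
      · rfl
      · rfl
      · rfl
      have hne := (hp x hx).ne'
      field_simp
      ring
    exact hF'.hasDerivWithinAt

theorem transformed_exponential_log_density (θ lam : ℝ) (hθ : 0 < θ)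
    (hlam : lam ∈ Set.Icc (-1 : ℝ) 1) :
    (lam ≤ 0 → ConcaveOn ℝ (Set.Ioi (0 : ℝ))
      (fun x => Real.log (θ * Real.exp (-θ * x) * (1 + lam * (2 * Real.exp (-θ * x) - 1))))) ∧
    (0 ≤ lam → ConvexOn ℝ (Set.Ioi (0 : ℝ))
      (fun x => Real.log (θ * Real.exp (-θ * x) * (1 + lam * (2 * Real.exp (-θ * x) - 1))))) := by
  obtain ⟨h1, h2⟩ := hlam
  obtain ⟨hcont, hd1, hd2⟩ := te_main hθ h1 h2
  have heq := te_eqOn hθ h1 h2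
  constructor
  · intro hl
    refine ConcaveOn.congr ?_ heq.symm
    refine concaveOn_of_hasDerivWithinAt2_nonpos (convex_Ioi 0) hcont hd1 hd2 ?_
    intro x hx
    rw [interior_Ioi] at hx
    have hp := te_pos hθ h1 h2 hx
    apply div_nonpos_of_nonpos_of_nonneg
    · have key : (0:ℝ) ≤ θ^2 * Real.exp (-θ * x) * (1 - lam) := mul_nonneg (by positivity) (by linarith)
      nlinarith [mul_nonpos_of_nonpos_of_nonneg hl key]
    · positivity
  · intro hl
    refine ConvexOn.congr ?_ heq.symm
    refine convexOn_of_hasDerivWithinAt2_nonneg (convex_Ioi 0) hcont hd1 hd2 ?_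
    intro x hx
    rw [interior_Ioi] at hx
    have hp := te_pos hθ h1 h2 hx
    apply div_nonneg
    · have key : (0:ℝ) ≤ θ^2 * Real.exp (-θ * x) * (1 - lam) := mul_nonneg (by positivity) (by linarith)
      nlinarith [mul_nonneg hl key]
    · positivity
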